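/- Let γ > 0 and X ∈ Ŵ ∩ S with λ_1(X) > 0, and let F_γ(X) = P_Ŵ(X + γ·u_1(X) ⊗ u_1(X)) / ‖P_Ŵ(X + γ·u_1(X) ⊗ u_1(X))‖_F. Then: (a) 0 < λ_1(X) < ‖P_Ŵ(u_1(X) ⊗ u_1(X))‖_F if and only if λ_1(F_γ(X)) > λ_1(X); and (b) λ_1(X) = ‖P_Ŵ(u_1(X) ⊗ u_1(X))‖_F if and only if F_γ(X) = X. -/

import Mathlib

open Matrix

noncomputable def vnorm {d : ℕ} (v : Fin d → ℝ) : ℝ := Real.sqrt (∑ i, v i ^ 2)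

noncomputable def frobInner {d : ℕ} (M N : Matrix (Fin d) (Fin d) ℝ) : ℝ :=
  ∑ i, ∑ j, M i j * N i j

noncomputable def frobNorm {d : ℕ} (M : Matrix (Fin d) (Fin d) ℝ) : ℝ :=
  Real.sqrt (frobInner M M)

def IsOrthProjOn {d : ℕ} (V : Submodule ℝ (Matrix (Fin d) (Fin d) ℝ))
    (P : Matrix (Fin d) (Fin d) ℝ →ₗ[ℝ] Matrix (Fin d) (Fin d) ℝ) : Prop :=
  (∀ X, P X ∈ V) ∧ (∀ X ∈ V, P X = X) ∧ ∀ X Y, frobInner (P X) Y = frobInner X (P Y)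

noncomputable def hsNorm {d : ℕ}
    (T : Matrix (Fin d) (Fin d) ℝ →ₗ[ℝ] Matrix (Fin d) (Fin d) ℝ) : ℝ :=
  Real.sqrt (∑ i, ∑ j,
    frobInner (T (Matrix.single i j 1)) (T (Matrix.single i j 1)))

noncomputable def specNorm {d : ℕ} (M : Matrix (Fin d) (Fin d) ℝ) : ℝ :=
  sSup {r : ℝ | ∃ v : Fin d → ℝ, (∑ i, v i ^ 2) = 1 ∧ r = |dotProduct v (M.mulVec v)|}

noncomputable def lamTop {d : ℕ} (M : Matrix (Fin d) (Fin d) ℝ) : ℝ :=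
  sSup {r : ℝ | ∃ v : Fin d → ℝ, (∑ i, v i ^ 2) = 1 ∧ r = dotProduct v (M.mulVec v)}

def IsLocMaxSpec {d : ℕ} (V : Submodule ℝ (Matrix (Fin d) (Fin d) ℝ))
    (M : Matrix (Fin d) (Fin d) ℝ) : Prop :=
  M ∈ V ∧ frobNorm M ≤ 1 ∧
    ∃ ε > 0, ∀ X ∈ V, frobNorm X ≤ 1 → frobNorm (X - M) < ε → specNorm X ≤ specNorm M

section Aux

variable {d : ℕ}

lemma frobInner_comm (M N : Matrix (Fin d) (Fin d) ℝ) : frobInner M N = frobInner N M := by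
  simp [frobInner, mul_comm]

lemma frobInner_add_left (M N P : Matrix (Fin d) (Fin d) ℝ) :
    frobInner (M + N) P = frobInner M P + frobInner N P := by
  simp [frobInner, Matrix.add_apply, add_mul, Finset.sum_add_distrib]

lemma frobInner_smul_left (c : ℝ) (M N : Matrix (Fin d) (Fin d) ℝ) :
    frobInner (c • M) N = c * frobInner M N := by
  simp [frobInner, Matrix.smul_apply, smul_eq_mul, mul_assoc, Finset.mul_sum]

lemma frobInner_add_right (M N P : Matrix (Fin d) (Fin d) ℝ) :
    frobInner M (N + P) = frobInner M N + frobInner M P := by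
  rw [frobInner_comm, frobInner_add_left, frobInner_comm N M, frobInner_comm P M]

lemma frobInner_smul_right (c : ℝ) (M N : Matrix (Fin d) (Fin d) ℝ) :
    frobInner M (c • N) = c * frobInner M N := by
  rw [frobInner_comm, frobInner_smul_left, frobInner_comm]

lemma frobInner_self_nonneg (M : Matrix (Fin d) (Fin d) ℝ) : 0 ≤ frobInner M M := by
  apply Finset.sum_nonneg; intro i _
  apply Finset.sum_nonneg; intro j _
  exact mul_self_nonneg _

lemma frobInner_self_eq_zero {M : Matrix (Fin d) (Fin d) ℝ} (h : frobInner M M = 0) : M = 0 := by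
  ext i j
  have h1 := (Finset.sum_eq_zero_iff_of_nonneg (fun i _ =>
    Finset.sum_nonneg (fun j _ => mul_self_nonneg (M i j)))).mp h i (Finset.mem_univ i)
  have h2 := (Finset.sum_eq_zero_iff_of_nonneg (fun j _ =>
    mul_self_nonneg (M i j))).mp h1 j (Finset.mem_univ j)
  have := mul_self_eq_zero.mp h2
  simpa using this

lemma frobNorm_sq (M : Matrix (Fin d) (Fin d) ℝ) : frobNorm M ^ 2 = frobInner M M :=
  Real.sq_sqrt (frobInner_self_nonneg M)

lemma frobInner_prod (M N : Matrix (Fin d) (Fin d) ℝ) :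
    frobInner M N = ∑ p : Fin d × Fin d, M p.1 p.2 * N p.1 p.2 := by
  simp [frobInner, Fintype.sum_prod_type]

lemma frobInner_le (M N : Matrix (Fin d) (Fin d) ℝ) :
    frobInner M N ≤ frobNorm M * frobNorm N := by
  have hcs : (frobInner M N) ^ 2 ≤ frobInner M M * frobInner N N := by
    rw [frobInner_prod M N, frobInner_prod M M, frobInner_prod N N]
    have := Finset.sum_mul_sq_le_sq_mul_sq Finset.univ
      (fun p : Fin d × Fin d => M p.1 p.2) (fun p : Fin d × Fin d => N p.1 p.2)
    calc (∑ p : Fin d × Fin d, M p.1 p.2 * N p.1 p.2) ^ 2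
        ≤ (∑ p : Fin d × Fin d, M p.1 p.2 ^ 2) * ∑ p : Fin d × Fin d, N p.1 p.2 ^ 2 := this
      _ = (∑ p : Fin d × Fin d, M p.1 p.2 * M p.1 p.2) *
            ∑ p : Fin d × Fin d, N p.1 p.2 * N p.1 p.2 := by simp [sq]
  calc frobInner M N ≤ |frobInner M N| := le_abs_self _
    _ = Real.sqrt ((frobInner M N) ^ 2) := (Real.sqrt_sq_eq_abs _).symm
    _ ≤ Real.sqrt (frobInner M M * frobInner N N) := Real.sqrt_le_sqrt hcs
    _ = frobNorm M * frobNorm N := by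
        rw [Real.sqrt_mul (frobInner_self_nonneg M)]; rfl

lemma quad_form_eq (M : Matrix (Fin d) (Fin d) ℝ) (v : Fin d → ℝ) :
    dotProduct v (M.mulVec v) = frobInner M (vecMulVec v v) := by
  simp only [dotProduct, Matrix.mulVec, frobInner, Matrix.vecMulVec_apply, dotProduct,
    Finset.mul_sum]
  exact Finset.sum_congr rfl fun i _ => Finset.sum_congr rfl fun j _ => by ring

lemma frobNorm_vecMulVec_self (v : Fin d → ℝ) (hv : ∑ i, v i ^ 2 = 1) :
    frobNorm (vecMulVec v v) = 1 := by
  have : frobInner (vecMulVec v v) (vecMulVec v v) = 1 := by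
    simp only [frobInner, Matrix.vecMulVec_apply]
    have : ∀ i, ∑ j, v i * v j * (v i * v j) = v i ^ 2 * ∑ j, v j ^ 2 := by
      intro i; rw [Finset.mul_sum]
      exact Finset.sum_congr rfl fun j _ => by ring
    rw [Finset.sum_congr rfl fun i _ => this i]
    simp [hv, ← Finset.sum_mul]
  rw [frobNorm, this, Real.sqrt_one]

lemma lamTop_bddAbove (M : Matrix (Fin d) (Fin d) ℝ) :
    BddAbove {r : ℝ | ∃ v : Fin d → ℝ, (∑ i, v i ^ 2) = 1 ∧ r = dotProduct v (M.mulVec v)} := by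
  refine ⟨frobNorm M, ?_⟩
  rintro r ⟨v, hv, rfl⟩
  calc dotProduct v (M.mulVec v) = frobInner M (vecMulVec v v) := quad_form_eq M v
    _ ≤ frobNorm M * frobNorm (vecMulVec v v) := frobInner_le _ _
    _ = frobNorm M := by rw [frobNorm_vecMulVec_self v hv, mul_one]

lemma le_lamTop (M : Matrix (Fin d) (Fin d) ℝ) (v : Fin d → ℝ) (hv : ∑ i, v i ^ 2 = 1) :
    dotProduct v (M.mulVec v) ≤ lamTop M :=
  le_csSup (lamTop_bddAbove M) ⟨v, hv, rfl⟩

end Aux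

/-- characterization of eigenvalue increase and of the stopping condition
for the iteration `F_γ`. -/
theorem iteration_and_stopping_condition
    (d : ℕ) (γ : ℝ) (hγ : 0 < γ)
    (Wh : Submodule ℝ (Matrix (Fin d) (Fin d) ℝ))
    (hWhsym : ∀ X ∈ Wh, X.IsSymm)
    (PWh : Matrix (Fin d) (Fin d) ℝ →ₗ[ℝ] Matrix (Fin d) (Fin d) ℝ)
    (hPWh : IsOrthProjOn Wh PWh)
    (X : Matrix (Fin d) (Fin d) ℝ) (hX : X ∈ Wh) (hXS : frobNorm X = 1)
    (u : Fin d → ℝ) (hu : ∑ i, u i ^ 2 = 1)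
    (heig : X.mulVec u = lamTop X • u)
    (hpos : 0 < lamTop X)
    (Y : Matrix (Fin d) (Fin d) ℝ)
    (hY : Y = (frobNorm (PWh (X + γ • vecMulVec u u)))⁻¹ • PWh (X + γ • vecMulVec u u)) :
    ((0 < lamTop X ∧ lamTop X < frobNorm (PWh (vecMulVec u u))) ↔ lamTop X < lamTop Y) ∧
      (lamTop X = frobNorm (PWh (vecMulVec u u)) ↔ Y = X) := by
  obtain ⟨hP1, hP2, hP3⟩ := hPWh
  set t := lamTop X with ht
  set A := vecMulVec u u with hA
  set B := PWh A with hB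
  set c := frobNorm B with hc
  have huu : dotProduct u u = 1 := by
    simpa [dotProduct, sq] using hu
  -- basic inner products
  have hXX : frobInner X X = 1 := by
    have := frobNorm_sq X
    rw [hXS] at this; linarith
  have hXA : frobInner X A = t := by
    rw [← quad_form_eq, heig, dotProduct_smul, smul_eq_mul, huu, mul_one]
  have hXB : frobInner X B = t := by
    have h1 : frobInner (PWh X) A = frobInner X (PWh A) := hP3 X A
    rw [hP2 X hX] at h1
    rw [hB, ← h1, hXA]
  have hBB : frobInner B B = c ^ 2 := (frobNorm_sq B).symm
  have hBA : frobInner B A = c ^ 2 := by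
    have h1 : frobInner (PWh A) A = frobInner A (PWh A) := frobInner_comm _ _
    have h2 : frobInner (PWh A) (PWh A) = frobInner A (PWh (PWh A)) := hP3 A (PWh A)
    rw [hP2 (PWh A) (hP1 A)] at h2
    rw [hB, h1, ← h2, ← hB, hBB]
  have htc : t ≤ c := by
    calc t = frobInner X B := hXB.symm
      _ ≤ frobNorm X * frobNorm B := frobInner_le X B
      _ = c := by rw [hXS, one_mul]
  have hcpos : 0 < c := lt_of_lt_of_le hpos htc
  -- the unnormalized iterate
  set Z := X + γ • B with hZ
  have hPZ : PWh (X + γ • A) = Z := by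
    rw [map_add, LinearMap.map_smul, hP2 X hX, hZ, hB]
  have hY' : Y = (frobNorm Z)⁻¹ • Z := by rw [hY, hPZ]
  have hZZ : frobInner Z Z = 1 + 2 * γ * t + γ ^ 2 * c ^ 2 := by
    rw [hZ]
    simp only [frobInner_add_left, frobInner_add_right, frobInner_smul_left,
      frobInner_smul_right, frobInner_comm B X, hXX, hXB, hBB]
    ring
  have hSpos : (0:ℝ) < 1 + 2 * γ * t + γ ^ 2 * c ^ 2 := by positivity
  have hZpos : 0 < frobNorm Z := by
    rw [frobNorm, hZZ]; exact Real.sqrt_pos.mpr hSpos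
  have hZA : frobInner Z A = t + γ * c ^ 2 := by
    rw [hZ, frobInner_add_left, frobInner_smul_left, hXA, hBA]
  have huYu : dotProduct u (Y.mulVec u) = (frobNorm Z)⁻¹ * (t + γ * c ^ 2) := by
    rw [hY', quad_form_eq, ← hA, frobInner_smul_left, hZA]
  -- forward direction of (a)
  have hfwd : t < c → t < lamTop Y := by
    intro hlt
    have key : t * frobNorm Z < t + γ * c ^ 2 := by
      have hrhs : (0:ℝ) < t + γ * c ^ 2 := by positivity
      have hsq : (t * frobNorm Z) ^ 2 < (t + γ * c ^ 2) ^ 2 := by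
        have hZsq : frobNorm Z ^ 2 = 1 + 2 * γ * t + γ ^ 2 * c ^ 2 := by
          rw [frobNorm_sq, hZZ]
        have h2 : t ^ 2 < c ^ 2 := by nlinarith
        calc (t * frobNorm Z) ^ 2 = t ^ 2 * (1 + 2 * γ * t + γ ^ 2 * c ^ 2) := by
              rw [mul_pow, hZsq]
          _ < (t + γ * c ^ 2) ^ 2 := by
              have hd : 0 < c ^ 2 - t ^ 2 := by linarith
              have k1 : 0 < γ * t * (c ^ 2 - t ^ 2) := mul_pos (mul_pos hγ hpos) hd
              have k2 : 0 < γ ^ 2 * c ^ 2 * (c ^ 2 - t ^ 2) :=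
                mul_pos (mul_pos (pow_pos hγ 2) (pow_pos hcpos 2)) hd
              nlinarith [k1, k2]
      exact lt_of_pow_lt_pow_left₀ 2 hrhs.le hsq
    have h1 : t < (frobNorm Z)⁻¹ * (t + γ * c ^ 2) := by
      rw [inv_mul_eq_div, lt_div_iff₀ hZpos]
      exact key
    calc t < (frobNorm Z)⁻¹ * (t + γ * c ^ 2) := h1
      _ = dotProduct u (Y.mulVec u) := huYu.symm
      _ ≤ lamTop Y := le_lamTop Y u hu
  -- stopping: t = c implies Y = X
  have hstop : t = c → Y = X := by
    intro htc'
    have hD : frobInner (B - t • X) (B - t • X) = 0 := by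
      have hexp : frobInner (B - t • X) (B - t • X)
          = frobInner B B - 2 * t * frobInner X B + t ^ 2 * frobInner X X := by
        have h1 : B - t • X = B + (-t) • X := by
          rw [neg_smul, ← sub_eq_add_neg]
        rw [h1]
        simp only [frobInner_add_left, frobInner_add_right, frobInner_smul_left,
          frobInner_smul_right, frobInner_comm X B]
        ring
      rw [hexp, hXX, hXB, hBB, ← htc']
      ring
    have hBX : B = t • X := by
      have := frobInner_self_eq_zero hD
      rwa [sub_eq_zero] at this
    have hZX : Z = (1 + γ * t) • X := by
      rw [hZ, hBX, smul_smul, add_smul, one_smul]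
    have hnm : frobNorm Z = 1 + γ * t := by
      have h1 : frobInner Z Z = (1 + γ * t) ^ 2 * frobInner X X := by
        rw [hZX, frobInner_smul_left, frobInner_smul_right]; ring
      have hpos1 : (0:ℝ) < 1 + γ * t := by positivity
      rw [frobNorm, h1, hXX, mul_one, Real.sqrt_sq hpos1.le]
    have hne : (1 + γ * t) ≠ 0 := by positivity
    rw [hY', hnm, hZX, smul_smul, inv_mul_cancel₀ hne, one_smul]
  constructor
  · constructor
    · rintro ⟨_, hlt⟩; exact hfwd hlt
    · intro hlt
      refine ⟨hpos, ?_⟩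
      rcases htc.lt_or_eq with h | h
      · exact h
      · exfalso
        rw [hstop h, ← ht] at hlt
        exact lt_irrefl _ hlt
  · constructor
    · exact hstop
    · intro hYX
      rcases htc.lt_or_eq with h | h
      · exfalso
        have := hfwd h
        rw [hYX, ← ht] at this
        exact lt_irrefl _ this
      · exact h
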